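/- The spectrum of an element (a,b) in the generalized Lau product A ×_T B equals the union of the spectrum of a + T(b) in A and the spectrum of b in B. -/

import Mathlib

lemma isUnit_prod_mk_iff {A B : Type*} [Monoid A] [Monoid B] (x : A) (y : B) :
    IsUnit ((x, y) : A × B) ↔ IsUnit x ∧ IsUnit y := by
  constructor
  · rintro ⟨v, hv⟩
    obtain ⟨w, hw1, hw2⟩ := isUnit_iff_exists.mp ⟨v, hv⟩
    rw [Prod.ext_iff] at hw1 hw2
    exact ⟨isUnit_iff_exists.mpr ⟨w.1, hw1.1, hw2.1⟩,
      isUnit_iff_exists.mpr ⟨w.2, hw1.2, hw2.2⟩⟩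
  · rintro ⟨hx, hy⟩
    obtain ⟨x', hx1, hx2⟩ := isUnit_iff_exists.mp hx
    obtain ⟨y', hy1, hy2⟩ := isUnit_iff_exists.mp hy
    exact isUnit_iff_exists.mpr ⟨(x', y'),
      Prod.ext hx1 hy1, Prod.ext hx2 hy2⟩

lemma lau_prod_inv_iff
    {A B : Type*}
    [NormedRing A] [NormedAlgebra ℂ A]
    [NormedRing B] [NormedAlgebra ℂ B]
    (T : B →ₐ[ℂ] A)
    (mulT : A × B → A × B → A × B)
    (hmulT : ∀ x y : A × B,
      mulT x y = (x.1 * y.1 + T x.2 * y.1 + x.1 * T y.2, x.2 * y.2))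
    (u : A × B) :
    (∃ x : A × B, mulT u x = ((1 : A) - T 1, (1 : B)) ∧
        mulT x u = ((1 : A) - T 1, (1 : B)))
      ↔ IsUnit ((u.1 + T u.2, u.2) : A × B) := by
  constructor
  · rintro ⟨x, h1, h2⟩
    rw [hmulT] at h1 h2
    simp only [Prod.mk.injEq] at h1 h2
    rw [isUnit_iff_exists]
    refine ⟨(x.1 + T x.2, x.2), ?_, ?_⟩
    · have key : (u.1 + T u.2) * (x.1 + T x.2)
          = (u.1 * x.1 + T u.2 * x.1 + u.1 * T x.2) + T u.2 * T x.2 := by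
        noncomm_ring
      refine Prod.ext ?_ ?_
      · show (u.1 + T u.2) * (x.1 + T x.2) = 1
        rw [key, h1.1, ← map_mul, h1.2, map_one]
        abel
      · exact h1.2
    · have key : (x.1 + T x.2) * (u.1 + T u.2)
          = (x.1 * u.1 + T x.2 * u.1 + x.1 * T u.2) + T x.2 * T u.2 := by
        noncomm_ring
      refine Prod.ext ?_ ?_
      · show (x.1 + T x.2) * (u.1 + T u.2) = 1
        rw [key, h2.1, ← map_mul, h2.2, map_one]
        abel
      · exact h2.2
  · intro h
    obtain ⟨v, hv1, hv2⟩ := isUnit_iff_exists.mp h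
    rw [Prod.ext_iff] at hv1 hv2
    simp only [Prod.fst_mul, Prod.snd_mul, Prod.fst_one, Prod.snd_one] at hv1 hv2
    refine ⟨(v.1 - T v.2, v.2), ?_, ?_⟩ <;> rw [hmulT] <;> refine Prod.ext ?_ ?_
    · show u.1 * (v.1 - T v.2) + T u.2 * (v.1 - T v.2) + u.1 * T v.2 = 1 - T 1
      have key : u.1 * (v.1 - T v.2) + T u.2 * (v.1 - T v.2) + u.1 * T v.2
          = (u.1 + T u.2) * v.1 - T u.2 * T v.2 := by noncomm_ring
      rw [key, hv1.1, ← map_mul, hv1.2, map_one]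
    · exact hv1.2
    · show (v.1 - T v.2) * u.1 + T v.2 * u.1 + (v.1 - T v.2) * T u.2 = 1 - T 1
      have key : (v.1 - T v.2) * u.1 + T v.2 * u.1 + (v.1 - T v.2) * T u.2
          = v.1 * (u.1 + T u.2) - T v.2 * T u.2 := by noncomm_ring
      rw [key, hv2.1, ← map_mul, hv2.2, map_one]
    · exact hv2.2

/-- The spectrum of an element `(a,b)` of the generalized Lau product
`A ×_T B` (unital with identity `(1 − T 1, 1)`) equals the union of the spectrum of
`a + T b` in `A` and the spectrum of `b` in `B`. -/
theorem lau_prod_spectrum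
    {A B : Type*}
    [NormedRing A] [NormedAlgebra ℂ A] [CompleteSpace A]
    [NormedRing B] [NormedAlgebra ℂ B] [CompleteSpace B]
    (T : B →ₐ[ℂ] A) (hT : Continuous T)
    (mulT : A × B → A × B → A × B)
    (hmulT : ∀ x y : A × B,
      mulT x y = (x.1 * y.1 + T x.2 * y.1 + x.1 * T y.2, x.2 * y.2))
    (a : A) (b : B) :
    {z : ℂ | ¬ ∃ x : A × B,
        mulT (z • ((1 : A) - T 1, (1 : B)) - (a, b)) x = ((1 : A) - T 1, (1 : B)) ∧
        mulT x (z • ((1 : A) - T 1, (1 : B)) - (a, b)) = ((1 : A) - T 1, (1 : B))}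
      = spectrum ℂ (a + T b) ∪ spectrum ℂ b := by
  ext z
  set u : A × B := z • ((1 : A) - T 1, (1 : B)) - (a, b) with hu
  have hu1 : u.1 = z • ((1 : A) - T 1) - a := rfl
  have hu2 : u.2 = z • (1 : B) - b := rfl
  have hpair : ((u.1 + T u.2, u.2) : A × B)
      = (algebraMap ℂ A z - (a + T b), algebraMap ℂ B z - b) := by
    refine Prod.ext ?_ ?_
    · show u.1 + T u.2 = algebraMap ℂ A z - (a + T b)
      rw [hu1, hu2, map_sub, map_smul, map_one, smul_sub,
        Algebra.algebraMap_eq_smul_one]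
      abel
    · show u.2 = algebraMap ℂ B z - b
      rw [hu2, Algebra.algebraMap_eq_smul_one]
  simp only [Set.mem_setOf_eq, Set.mem_union, spectrum.mem_iff,
    lau_prod_inv_iff T mulT hmulT u, hpair, isUnit_prod_mk_iff, not_and_or]
  exact (not_congr (lau_prod_inv_iff T mulT hmulT u)).trans
    (by rw [hpair, isUnit_prod_mk_iff, not_and_or])
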